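/- Let P be a locally geometric poset and let a be an atom of P. Then rk(P) − rk(P') equals either 0 or 1, where P' = P(A(P)∖{a}) is the subposet of P generated by the atoms other than a. -/

import Mathlib

open scoped Classical
open Polynomial

noncomputable section

namespace PosetArr

/-- The rank of an element of a poset: the length of the longest chain
strictly below it. In a ranked poset this is the common length of all maximal
chains with greatest element `x`. -/
noncomputable def rk {α : Type*} [Preorder α] (x : α) : ℕ :=
  (Set.chainHeight (Set.Iio x) (· < ·)).toNat

/-- The rank of a (finite) poset: the maximal rank of an element. -/
noncomputable def prk (α : Type*) [Preorder α] [Fintype α] : ℕ :=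
  Finset.univ.sup (rk (α := α))

/-- A finite poset is ranked iff covering relations increase `rk` by one;
equivalently, for every `x` all maximal chains with greatest element `x`
have the same length. -/
def IsRanked (α : Type*) [Preorder α] : Prop :=
  ∀ x y : α, x ⋖ y → rk y = rk x + 1

/-- The set of atoms (elements of rank 1) of a poset. -/
def atoms (α : Type*) [Preorder α] : Set α := {x : α | rk x = 1}

/-- `joinSet T` is the join `⋁ T`: the set of minimal upper bounds of `T`. -/
def joinSet {α : Type*} [PartialOrder α] (T : Set α) : Set α :=
  {z | z ∈ upperBounds T ∧ ∀ w ∈ upperBounds T, w ≤ z → w = z}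

/-- `meetSet T` is the meet `⋀ T`: the set of maximal lower bounds of `T`. -/
def meetSet {α : Type*} [PartialOrder α] (T : Set α) : Set α :=
  {z | z ∈ lowerBounds T ∧ ∀ w ∈ lowerBounds T, z ≤ w → w = z}

/-- A poset is a lattice if any two elements have a unique minimal upper
bound and a unique maximal lower bound. -/
def IsLatticePoset (α : Type*) [PartialOrder α] : Prop :=
  ∀ x y : α, (∃! z, z ∈ joinSet {x, y}) ∧ (∃! z, z ∈ meetSet {x, y})

/-- A (finite) lattice is geometric if for all `x, y`: `y` covers `x` iff
there is an atom `a` with `a ≰ x` and `y = x ∨ a`. -/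
def IsGeomLattice (α : Type*) [PartialOrder α] : Prop :=
  IsLatticePoset α ∧
    ∀ x y : α, x ⋖ y ↔ ∃ a : α, a ∈ atoms α ∧ ¬a ≤ x ∧ y ∈ joinSet {x, a}

/-- A finite ranked poset is locally geometric if every lower interval
`P_{≤ x}` is a geometric lattice. -/
def IsLocallyGeometric (α : Type*) [PartialOrder α] : Prop :=
  IsRanked α ∧ ∀ x : α, IsGeomLattice {y : α // y ≤ x}

/-- The Möbius function of a finite poset. -/
noncomputable def mob {α : Type*} [PartialOrder α] [Fintype α] (a b : α) : ℤ :=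
  if a = b then 1
  else if a < b then
    - ∑ c ∈ (Finset.univ.filter (fun c : α => a ≤ c ∧ c < b)).attach, mob a c.1
  else 0
termination_by (Finset.univ.filter (fun c : α => c ≤ b)).card
decreasing_by
  have hc := c.2
  simp only [Finset.mem_filter, Finset.mem_univ, true_and] at hc
  apply Finset.card_lt_card
  constructor
  · intro z hz
    simp only [Finset.mem_filter, Finset.mem_univ, true_and] at hz ⊢
    exact hz.trans hc.2.le
  · intro hsub
    have hb : b ∈ Finset.univ.filter (fun z : α => z ≤ b) := by
      simp
    have := hsub hb
    simp only [Finset.mem_filter, Finset.mem_univ, true_and] at this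
    exact absurd (lt_of_le_of_lt this hc.2) (lt_irrefl _)

/-- The characteristic polynomial of a finite ranked poset with `0̂`:
`χ_P(t) = ∑_x μ(0̂,x) t^(rk(P) - rk(x))`. -/
noncomputable def charPoly (α : Type*) [PartialOrder α] [Fintype α] [OrderBot α] :
    Polynomial ℤ :=
  ∑ x : α, Polynomial.C (mob ⊥ x) * Polynomial.X ^ (prk α - rk x)

/-- The subposet of `P` generated by a set `B` of atoms: the minimal element
together with all joins of subsets of `B`. -/
def genSub {α : Type*} [PartialOrder α] [OrderBot α] (B : Set α) : Set α :=
  insert ⊥ {z | ∃ T ⊆ B, z ∈ joinSet T}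

instance upperOrderBot {α : Type*} [PartialOrder α] (a : α) :
    OrderBot {y : α // a ≤ y} where
  bot := ⟨a, le_rfl⟩
  bot_le y := y.2

instance genSubOrderBot {α : Type*} [PartialOrder α] [OrderBot α] (B : Set α) :
    OrderBot {y : α // y ∈ genSub B} where
  bot := ⟨⊥, Set.mem_insert _ _⟩
  bot_le y := bot_le

/-- `OrderBot` structure on a down-set containing `⊥`. -/
def subsetOrderBot {α : Type*} [PartialOrder α] [OrderBot α] {Q : Set α}
    (h : ⊥ ∈ Q) : OrderBot {y : α // y ∈ Q} where
  bot := ⟨⊥, h⟩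
  bot_le y := bot_le

/-- The class of inductive posets: the smallest class of locally geometric
posets containing the one-element poset and closed under the addition step:
`P ∈ IP` whenever there is an atom `a` such that `P'' = P_{≥a} ∈ IP`,
`P' = P(A(P) \ {a}) ∈ IP` and `χ_{P''} ∣ χ_{P'}`. -/
inductive IsInductivePoset :
    ∀ (β : Type) (po : PartialOrder β) (fin : Fintype β) (bo : OrderBot β), Prop where
  | triv (β : Type) [po : PartialOrder β] [fin : Fintype β] [bo : OrderBot β]
      (h : ∀ x : β, x = ⊥) : IsInductivePoset β po fin bo
  | step (β : Type) [po : PartialOrder β] [fin : Fintype β] [bo : OrderBot β]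
      (hLG : IsLocallyGeometric β) (a : β) (ha : a ∈ atoms β)
      (hres : IsInductivePoset {y : β // a ≤ y} inferInstance inferInstance inferInstance)
      (hdel : IsInductivePoset {y : β // y ∈ genSub (atoms β \ {a})}
        inferInstance inferInstance inferInstance)
      (hdvd : charPoly {y : β // a ≤ y} ∣ charPoly {y : β // y ∈ genSub (atoms β \ {a})}) :
      IsInductivePoset β po fin bo

/-- The class of divisional posets: the smallest class of locally geometric
posets containing the one-element poset and closed under:
`P ∈ DP` whenever there is an atom `a` such that `P'' = P_{≥a} ∈ DP`
and `χ_{P''} ∣ χ_P`. -/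
inductive IsDivisionalPoset :
    ∀ (β : Type) (po : PartialOrder β) (fin : Fintype β) (bo : OrderBot β), Prop where
  | triv (β : Type) [po : PartialOrder β] [fin : Fintype β] [bo : OrderBot β]
      (h : ∀ x : β, x = ⊥) : IsDivisionalPoset β po fin bo
  | step (β : Type) [po : PartialOrder β] [fin : Fintype β] [bo : OrderBot β]
      (hLG : IsLocallyGeometric β) (a : β) (ha : a ∈ atoms β)
      (hres : IsDivisionalPoset {y : β // a ≤ y} inferInstance inferInstance inferInstance)
      (hdvd : charPoly {y : β // a ≤ y} ∣ charPoly β) :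
      IsDivisionalPoset β po fin bo

/-- An element `m` of a (geometric) lattice is modular if
`m ∧ (y ∨ z) = (m ∧ y) ∨ z` for all `z ≤ m` and all `y`. Joins and meets are
expressed via `joinSet` and `meetSet`. -/
def IsModular {β : Type*} [PartialOrder β] (m : β) : Prop :=
  ∀ z y j mj my r : β, z ≤ m →
    j ∈ joinSet {y, z} → mj ∈ meetSet {m, j} →
    my ∈ meetSet {m, y} → r ∈ joinSet {my, z} → mj = r

/-- `Q` is an M-ideal of the locally geometric poset `β`. -/
def IsMIdeal (β : Type*) [PartialOrder β] (Q : Set β) : Prop :=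
  IsLowerSet Q ∧
  (∀ x y : β, Maximal (· ∈ Q) x → Maximal (· ∈ Q) y → rk x = rk y) ∧
  (∀ T ⊆ Q, joinSet T ⊆ Q) ∧
  (∀ y ∈ Q, ∀ a ∈ atoms β, a ∉ Q → (joinSet {a, y}).Nonempty) ∧
  (∀ x : β, IsMax x → ∃ y, Maximal (· ∈ Q) y ∧
    ∃ h : y ≤ x, IsModular (⟨y, h⟩ : {u : β // u ≤ x}))

/-- `Q` is a TM-ideal of the locally geometric poset `β`: an M-ideal where
moreover `|a ∨ y| = 1` for `y ∈ Q` and atoms `a ∉ Q`. -/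
def IsTMIdeal (β : Type*) [PartialOrder β] (Q : Set β) : Prop :=
  IsMIdeal β Q ∧ ∀ y ∈ Q, ∀ a ∈ atoms β, a ∉ Q → ∃! z, z ∈ joinSet {a, y}

/-- A locally geometric poset is supersolvable if it admits an M-chain
`{0̂} = Q_0 ⊊ Q_1 ⊊ ⋯ ⊊ Q_r = P` with each `Q_i` an M-ideal of `Q_{i+1}`
and `rk(Q_i) = i`. -/
def IsSupersolvable (β : Type*) [PartialOrder β] [Fintype β] [OrderBot β] : Prop :=
  ∃ Q : Fin (prk β + 1) → Set β,
    Q 0 = {⊥} ∧ Q (Fin.last _) = Set.univ ∧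
    (∀ i : Fin (prk β), Q i.castSucc ⊂ Q i.succ) ∧
    (∀ i : Fin (prk β + 1), prk {y : β // y ∈ Q i} = i) ∧
    ∀ i : Fin (prk β),
      IsMIdeal {y : β // y ∈ Q i.succ} {z : {y : β // y ∈ Q i.succ} | (z : β) ∈ Q i.castSucc}

/-- A locally geometric poset is strictly supersolvable if it admits a
TM-chain as above, with each `Q_i` a TM-ideal of `Q_{i+1}`. -/
def IsStrictlySupersolvable (β : Type*) [PartialOrder β] [Fintype β] [OrderBot β] : Prop :=
  ∃ Q : Fin (prk β + 1) → Set β,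
    Q 0 = {⊥} ∧ Q (Fin.last _) = Set.univ ∧
    (∀ i : Fin (prk β), Q i.castSucc ⊂ Q i.succ) ∧
    (∀ i : Fin (prk β + 1), prk {y : β // y ∈ Q i} = i) ∧
    ∀ i : Fin (prk β),
      IsTMIdeal {y : β // y ∈ Q i.succ} {z : {y : β // y ∈ Q i.succ} | (z : β) ∈ Q i.castSucc}

end PosetArr

end

namespace PosetArr
section Aux

open List

variable {α : Type*} [PartialOrder α]

lemma chainHeight_ne_top [Fintype α] (s : Set α) : s.chainHeight (· < ·) ≠ ⊤ :=
  Set.chainHeight_ne_top_of_finite _ _ s.toFinite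

lemma rk_coe [Fintype α] (x : α) : (rk x : ℕ∞) = (Set.Iio x).chainHeight (· < ·) := by
  rw [rk, ENat.coe_toNat (chainHeight_ne_top _)]

lemma rk_bot' [OrderBot α] : rk (⊥ : α) = 0 := by
  rw [rk]
  have : Set.Iio (⊥ : α) = ∅ := by ext y; simp
  simp [this, Set.chainHeight_empty]

/-- rank is preserved when passing to a lower subset. -/
lemma rk_val {p : α → Prop} (hp : ∀ ⦃u v : α⦄, u ≤ v → p v → p u)
    (u : {y : α // p y}) : rk u = rk (u : α) := by
  rw [rk, rk]
  congr 1
  rw [← Set.chainHeight_eq_of_relEmbedding (r' := ((· < ·) : α → α → Prop)) (Set.Iio u)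
    (OrderEmbedding.subtype p).ltEmbedding]
  congr 1
  ext y
  simp only [Set.mem_image, Set.mem_Iio]
  constructor
  · rintro ⟨w, hw, rfl⟩; exact hw
  · intro hy
    exact ⟨⟨y, hp hy.le u.2⟩, hy, rfl⟩

lemma rk_val_le [Fintype α] {p : α → Prop} (u : {y : α // p y}) : rk u ≤ rk (u : α) := by
  rw [rk, rk]
  have h1 : (Subtype.val '' Set.Iio u : Set α).chainHeight (· < ·)
      = (Set.Iio u).chainHeight (· < ·) :=
    Set.chainHeight_eq_of_relEmbedding (Set.Iio u) (OrderEmbedding.subtype p).ltEmbedding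
  have h2 : (Subtype.val '' Set.Iio u : Set α) ⊆ Set.Iio (u : α) := by
    rintro y ⟨w, hw, rfl⟩; exact hw
  have := (h1.symm.le.trans (Set.chainHeight_mono _ _ _ h2))
  exact ENat.toNat_le_toNat this (chainHeight_ne_top _)

lemma covBy_val {p : α → Prop} (hp : ∀ ⦃u v : α⦄, u ≤ v → p v → p u)
    {u v : {y : α // p y}} (h : u ⋖ v) : (u : α) ⋖ (v : α) := by
  refine ⟨h.1, fun d hd1 hd2 => ?_⟩
  have : ¬ ((⟨d, hp hd2.le v.2⟩ : {y // p y}) < v) := h.2 (Subtype.mk_lt_mk.2 hd1)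
  exact this (Subtype.mk_lt_mk.2 hd2)

lemma exists_covBy_of_lt' [Fintype α] {x y : α} (h : x < y) : ∃ c, x ⋖ c ∧ c ≤ y := by
  have hne : (Finset.univ.filter (fun c => x < c ∧ c ≤ y)).Nonempty := ⟨y, by simp [h]⟩
  obtain ⟨m, hm, hmin⟩ : ∃ m ∈ _, ∀ c ∈ _, ¬c < m := by
    obtain ⟨m, hm⟩ := Finset.exists_minimal hne
    exact ⟨m, hm.1, fun c hc hlt => hm.not_lt hc hlt⟩
  simp only [Finset.mem_filter, Finset.mem_univ, true_and] at hm
  refine ⟨m, ⟨hm.1, fun c hc1 hc2 => ?_⟩, hm.2⟩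
  refine hmin c ?_ hc2
  simp only [Finset.mem_filter, Finset.mem_univ, true_and]
  exact ⟨hc1, hc2.le.trans hm.2⟩

lemma rk_strict [Fintype α] {x y : α} (h : x < y) : rk x < rk y := by
  obtain ⟨t, hts, hte, htc⟩ :=
    Set.exists_eq_chainHeight_of_finite (Set.Iio x) (· < ·) (Set.toFinite _)
  have hxt : x ∉ t := fun hx => lt_irrefl x (hts hx)
  have hc : IsChain (· < ·) (insert x t) := htc.insert (fun b hb _ => Or.inr (hts hb))
  have hsub : insert x t ⊆ Set.Iio y := by
    intro i hi
    rcases hi with rfl | hi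
    · exact h
    · exact lt_trans (hts hi) h
  have hle := Set.encard_le_chainHeight_of_isChain _ _ hsub hc
  rw [Set.encard_insert_of_notMem hxt, hte, ← rk_coe, ← rk_coe] at hle
  have : rk x + 1 ≤ rk y := by exact_mod_cast hle
  omega

end Aux

section Lattice

variable {β : Type*} [PartialOrder β] [Fintype β]

noncomputable def join2 (hL : IsLatticePoset β) (x y : β) : β :=
  ((hL x y).1).exists.choose

lemma join2_mem (hL : IsLatticePoset β) (x y : β) :
    join2 hL x y ∈ joinSet {x, y} := ((hL x y).1).exists.choose_spec

lemma le_join2_left (hL : IsLatticePoset β) (x y : β) : x ≤ join2 hL x y :=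
  (join2_mem hL x y).1 (Set.mem_insert _ _)

lemma le_join2_right (hL : IsLatticePoset β) (x y : β) : y ≤ join2 hL x y :=
  (join2_mem hL x y).1 (Set.mem_insert_iff.2 (Or.inr rfl))

lemma join2_eq (hL : IsLatticePoset β) {x y j : β} (hj : j ∈ joinSet {x, y}) :
    j = join2 hL x y := (hL x y).1.unique hj (join2_mem hL x y)

lemma joinSet_pair_le (hL : IsLatticePoset β) {x y j w : β} (hj : j ∈ joinSet {x, y})
    (hx : x ≤ w) (hy : y ≤ w) : j ≤ w := by
  classical
  have hne : (Finset.univ.filter (fun u => x ≤ u ∧ y ≤ u ∧ u ≤ w)).Nonempty :=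
    ⟨w, by simp [hx, hy]⟩
  obtain ⟨m, hm, hmin⟩ : ∃ m ∈ _, ∀ c ∈ _, ¬c < m := by
    obtain ⟨m, hm⟩ := Finset.exists_minimal hne
    exact ⟨m, hm.1, fun c hc hlt => hm.not_lt hc hlt⟩
  simp only [Finset.mem_filter, Finset.mem_univ, true_and] at hm
  have hmj : m ∈ joinSet {x, y} := by
    constructor
    · rintro c hc
      rcases Set.mem_insert_iff.1 hc with rfl | hc
      · exact hm.1
      · rw [Set.mem_singleton_iff.1 hc]; exact hm.2.1
    · intro u hu hum
      have hux : x ≤ u := hu (Set.mem_insert _ _)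
      have huy : y ≤ u := hu (Set.mem_insert_iff.2 (Or.inr rfl))
      by_contra hne'
      refine hmin u ?_ (lt_of_le_of_ne hum hne')
      simp only [Finset.mem_filter, Finset.mem_univ, true_and]
      exact ⟨hux, huy, hum.trans hm.2.2⟩
  have : j = m := (join2_eq hL hj).trans (join2_eq hL hmj).symm
  exact this ▸ hm.2.2

lemma join2_le (hL : IsLatticePoset β) {x y w : β} (hx : x ≤ w) (hy : y ≤ w) :
    join2 hL x y ≤ w := joinSet_pair_le hL (join2_mem hL x y) hx hy

noncomputable def joinList (hL : IsLatticePoset β) (z0 : β) : List β → β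
  | [] => z0
  | b :: t => join2 hL b (joinList hL z0 t)

lemma le_joinList (hL : IsLatticePoset β) (z0 : β) (l : List β) :
    ∀ b ∈ l, b ≤ joinList hL z0 l := by
  induction l with
  | nil => intro b hb; cases hb
  | cons c t ih =>
    intro b hb
    rcases List.mem_cons.1 hb with rfl | hb
    · exact le_join2_left hL _ _
    · exact (ih b hb).trans (le_join2_right hL _ _)

lemma z0_le_joinList (hL : IsLatticePoset β) (z0 : β) (l : List β) :
    z0 ≤ joinList hL z0 l := by
  induction l with
  | nil => exact le_rfl
  | cons c t ih => exact ih.trans (le_join2_right hL _ _)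

lemma joinList_le (hL : IsLatticePoset β) (z0 : β) (l : List β) {w : β}
    (hz0 : z0 ≤ w) (hl : ∀ b ∈ l, b ≤ w) : joinList hL z0 l ≤ w := by
  induction l with
  | nil => exact hz0
  | cons c t ih =>
    exact join2_le hL (hl c (List.mem_cons_self))
      (ih (fun b hb => hl b (List.mem_cons_of_mem _ hb)))

end Lattice

section Geom

variable {α : Type*} [PartialOrder α] [Fintype α] [OrderBot α]

lemma rk_joinpair_le (hLG : IsLocallyGeometric α) (x : α)
    {p b m : {y : α // y ≤ x}} (hb : (b : α) ∈ atoms α)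
    (hm : m ∈ joinSet {p, b}) : rk (m : α) ≤ rk (p : α) + 1 := by
  have hlow : ∀ ⦃u v : α⦄, u ≤ v → v ≤ x → u ≤ x := fun u v h hv => h.trans hv
  have hgeom := hLG.2 x
  by_cases hble : b ≤ p
  · have hpub : p ∈ upperBounds ({p, b} : Set {y : α // y ≤ x}) := by
      rintro c hc
      rcases Set.mem_insert_iff.1 hc with rfl | hc
      · exact le_rfl
      · rw [Set.mem_singleton_iff.1 hc]; exact hble
    have hpm : p ≤ m := hm.1 (Set.mem_insert _ _)
    have := hm.2 p hpub hpm
    rw [← this]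
    omega
  · have hbL : b ∈ atoms {y : α // y ≤ x} := by
      show rk b = 1
      rw [rk_val hlow]
      exact hb
    have hcov : p ⋖ m := (hgeom.2 p m).mpr ⟨b, hbL, hble, hm⟩
    have := hLG.1 _ _ (covBy_val hlow hcov)
    omega

lemma exists_joinList_rk (hLG : IsLocallyGeometric α) (x : α)
    (hL : IsLatticePoset {y : α // y ≤ x}) (l : List {y : α // y ≤ x})
    (hmem : ∀ b ∈ l, (b : α) ∈ atoms α) (n : ℕ)
    (hn : n ≤ rk ((joinList hL ⟨⊥, bot_le⟩ l : {y : α // y ≤ x}) : α)) :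
    ∃ l' : List {y : α // y ≤ x}, l' ⊆ l ∧
      rk ((joinList hL ⟨⊥, bot_le⟩ l' : {y : α // y ≤ x}) : α) = n := by
  induction l with
  | nil =>
    refine ⟨[], by simp, ?_⟩
    have hb : ((joinList hL ⟨⊥, bot_le⟩ [] : {y : α // y ≤ x}) : α) = ⊥ := rfl
    rw [hb, rk_bot'] at hn ⊢
    omega
  | cons b t ih =>
    have hb := hmem b (List.mem_cons_self)
    have hstep : rk ((join2 hL b (joinList hL ⟨⊥, bot_le⟩ t) : {y : α // y ≤ x}) : α)
        ≤ rk ((joinList hL ⟨⊥, bot_le⟩ t : {y : α // y ≤ x}) : α) + 1 := by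
      apply rk_joinpair_le hLG x hb
      have := join2_mem hL b (joinList hL ⟨⊥, bot_le⟩ t)
      rwa [Set.pair_comm] at this
    simp only [joinList] at hn
    by_cases hcase : n ≤ rk ((joinList hL ⟨⊥, bot_le⟩ t : {y : α // y ≤ x}) : α)
    · obtain ⟨l', hl', hrk⟩ := ih (fun c hc => hmem c (List.mem_cons_of_mem _ hc)) hcase
      exact ⟨l', fun c hc => List.mem_cons_of_mem _ (hl' hc), hrk⟩
    · refine ⟨b :: t, List.Subset.refl _, ?_⟩
      simp only [joinList]
      omega

lemma joinList_mem_joinSet (x : α) (hL : IsLatticePoset {y : α // y ≤ x})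
    (l : List {y : α // y ≤ x}) :
    ((joinList hL ⟨⊥, bot_le⟩ l : {y : α // y ≤ x}) : α)
      ∈ joinSet {c : α | c ∈ l.map Subtype.val} := by
  constructor
  · rintro c hc
    simp only [Set.mem_setOf_eq, List.mem_map] at hc
    obtain ⟨b, hb, rfl⟩ := hc
    exact Subtype.coe_le_coe.2 (le_joinList hL _ l b hb)
  · intro w hw hwle
    have hwx : w ≤ x := hwle.trans (joinList hL ⟨⊥, bot_le⟩ l).2
    have hle : joinList hL ⟨⊥, bot_le⟩ l ≤ ⟨w, hwx⟩ := by
      apply joinList_le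
      · exact Subtype.coe_le_coe.1 bot_le
      · intro b hb
        refine Subtype.coe_le_coe.1 (hw ?_)
        simp only [Set.mem_setOf_eq, List.mem_map]
        exact ⟨b, hb, rfl⟩
    exact le_antisymm hwle hle

lemma exists_lower_join (hLG : IsLocallyGeometric α) {z : α} {S : Set α}
    (hS : S ⊆ atoms α) (hz : z ∈ joinSet S) {n : ℕ} (hrk : rk z = n + 1) :
    ∃ (z' : α) (S' : Set α), S' ⊆ S ∧ z' ∈ joinSet S' ∧ rk z' = n ∧ z' < z := by
  classical
  have hL : IsLatticePoset {y : α // y ≤ z} := (hLG.2 z).1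
  set l : List {y : α // y ≤ z} :=
    (Finset.univ.filter (fun u : {y : α // y ≤ z} => (u : α) ∈ S)).toList with hldef
  have hlmem : ∀ u : {y : α // y ≤ z}, u ∈ l ↔ (u : α) ∈ S := by
    intro u; simp [hldef]
  have hatoms : ∀ b ∈ l, (b : α) ∈ atoms α := fun b hb => hS ((hlmem b).1 hb)
  have hub : ((joinList hL ⟨⊥, bot_le⟩ l : {y : α // y ≤ z}) : α) ∈ upperBounds S := by
    intro s hs
    exact Subtype.coe_le_coe.2 (le_joinList hL _ l ⟨s, hz.1 hs⟩ ((hlmem _).2 hs))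
  have hjz : ((joinList hL ⟨⊥, bot_le⟩ l : {y : α // y ≤ z}) : α) = z :=
    hz.2 _ hub (joinList hL ⟨⊥, bot_le⟩ l).2
  obtain ⟨l', hl', hrk'⟩ := exists_joinList_rk hLG z hL l hatoms n (by rw [hjz, hrk]; omega)
  refine ⟨_, {c : α | c ∈ l'.map Subtype.val}, ?_, joinList_mem_joinSet z hL l', hrk', ?_⟩
  · rintro c hc
    simp only [Set.mem_setOf_eq, List.mem_map] at hc
    obtain ⟨b, hb, rfl⟩ := hc
    exact (hlmem b).1 (hl' hb)
  · refine lt_of_le_of_ne (joinList hL ⟨⊥, bot_le⟩ l').2 ?_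
    intro heq
    rw [heq, hrk] at hrk'
    omega

lemma exists_chain_genSub (hLG : IsLocallyGeometric α) {B : Set α} (hB : B ⊆ atoms α) :
    ∀ (n : ℕ) (z : α) (S : Set α), S ⊆ B → z ∈ joinSet S → rk z = n →
    ∃ l : List α, l.Chain' (· < ·) ∧ (∀ y ∈ l, y < z ∧ y ∈ genSub B) ∧ l.length = n := by
  intro n
  induction n with
  | zero => exact fun z S _ _ _ => ⟨[], List.isChain_nil, by simp, rfl⟩
  | succ m ih =>
    intro z S hSB hz hrk
    obtain ⟨z', S', hS'S, hz', hrk', hlt⟩ :=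
      exists_lower_join hLG (fun s hs => hB (hSB hs)) hz hrk
    obtain ⟨lz, hch, hmem, hlen⟩ := ih z' S' (hS'S.trans hSB) hz' hrk'
    refine ⟨lz ++ [z'], ?_, ?_, by simp [hlen]⟩
    · apply List.IsChain.append hch (List.isChain_singleton z')
      intro p hp q hq
      simp only [List.head?_cons, Option.mem_def, Option.some.injEq] at hq
      subst hq
      exact (hmem p (List.mem_of_mem_getLast? hp)).1
    · intro y hy
      rcases List.mem_append.1 hy with h1 | h1
      · exact ⟨(hmem y h1).1.trans hlt, (hmem y h1).2⟩
      · simp only [List.mem_singleton] at h1; subst h1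
        exact ⟨hlt, Set.mem_insert_iff.2 (Or.inr ⟨S', hS'S.trans hSB, hz'⟩)⟩

lemma length_le_rk_subtype {p : α → Prop} {z : α} (hz : p z) (l : List α)
    (hchain : l.Chain' (· < ·)) (hmem : ∀ y ∈ l, y < z ∧ p y) :
    l.length ≤ rk (⟨z, hz⟩ : {y : α // p y}) := by
  have himg : (Subtype.val '' Set.Iio (⟨z, hz⟩ : {y : α // p y}) : Set α)
      = {y | y < z ∧ p y} := by
    ext y
    constructor
    · rintro ⟨w, hw, rfl⟩; exact ⟨hw, w.2⟩
    · rintro ⟨h1, h2⟩; exact ⟨⟨y, h2⟩, h1, rfl⟩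
  have hrkval : rk (⟨z, hz⟩ : {y : α // p y})
      = (({y | y < z ∧ p y} : Set α).chainHeight (· < ·)).toNat := by
    rw [rk, ← himg]
    congr 1
    exact (Set.chainHeight_eq_of_relEmbedding _ (OrderEmbedding.subtype p).ltEmbedding).symm
  have hlen : (l.length : ℕ∞) ≤ ({y | y < z ∧ p y} : Set α).chainHeight (· < ·) := by
    have hpw := List.isChain_iff_pairwise.1 hchain
    have key : ∀ l : List α, l.Pairwise (· < ·) →
        ∀ u ∈ l, ∀ v ∈ l, u ≠ v → u < v ∨ v < u := by
      intro l hl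
      induction hl with
      | nil => simp
      | @cons a t h _ ih =>
        intro u hu v hv hne
        simp only [List.mem_cons] at hu hv
        rcases hu with rfl | hu <;> rcases hv with rfl | hv
        · exact absurd rfl hne
        · exact Or.inl (h v hv)
        · exact Or.inr (h u hu)
        · exact ih u hu v hv hne
    have hset : {y | y ∈ l} = ((l.toFinset : Finset α) : Set α) := by ext; simp
    have h1 : ({y | y ∈ l} : Set α).encard = l.length := by
      rw [hset, Set.encard_coe_eq_coe_finsetCard, List.toFinset_card_of_nodup hpw.nodup]
    rw [← h1]
    apply Set.encard_le_chainHeight_of_isChain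
    · intro y hy; exact hmem y hy
    · intro u hu v hv hne; exact key l hpw u hu v hv hne
  rw [hrkval]
  have := ENat.toNat_le_toNat hlen (chainHeight_ne_top _)
  simpa using this

lemma eq_top_of_ub_atoms (hLG : IsLocallyGeometric α) (x : α) (u : {y : α // y ≤ x})
    (hu : ∀ b : {y : α // y ≤ x}, (b : α) ∈ atoms α → b ≤ u) : (u : α) = x := by
  by_contra hne
  have hlt : u < ⟨x, le_rfl⟩ :=
    lt_of_le_of_ne (Subtype.coe_le_coe.1 u.2) (fun h => hne (congrArg Subtype.val h))
  obtain ⟨c, hcov, -⟩ := exists_covBy_of_lt' hlt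
  obtain ⟨b, hbat, hble, -⟩ := ((hLG.2 x).2 u c).mp hcov
  refine hble (hu b ?_)
  show rk (b : α) = 1
  rw [← rk_val (p := fun y => y ≤ x) (fun _ _ h hv => h.trans hv) b]
  exact hbat

end Geom

set_option maxHeartbeats 2000000 in
/-- Let `P` be a locally geometric poset and `a` an atom of `P`.
Then `rk(P) − rk(P')` is either `0` or `1`, where `P' = P(A(P) \ {a})`. -/
theorem rank_delete_eq_or_succ (α : Type) [PartialOrder α] [Fintype α] [OrderBot α]
    (hLG : IsLocallyGeometric α) (a : α) (ha : a ∈ atoms α) :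
    prk α = prk {y : α // y ∈ genSub (atoms α \ {a})} ∨
      prk α = prk {y : α // y ∈ genSub (atoms α \ {a})} + 1 := by
  classical
  set B := atoms α \ {a} with hBdef
  have hB : B ⊆ atoms α := Set.diff_subset
  -- upper bound: prk P' ≤ prk α
  have hub : prk {y : α // y ∈ genSub B} ≤ prk α := by
    apply Finset.sup_le
    intro u _
    exact (rk_val_le u).trans (Finset.le_sup (f := rk (α := α)) (Finset.mem_univ _))
  -- pick an element of maximal rank
  obtain ⟨x₀, -, hx₀⟩ := Finset.exists_mem_eq_sup Finset.univ
    ⟨⊥, Finset.mem_univ _⟩ (rk (α := α))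
  have hL : IsLatticePoset {y : α // y ≤ x₀} := (hLG.2 x₀).1
  set l : List {y : α // y ≤ x₀} :=
    (Finset.univ.filter (fun u : {y : α // y ≤ x₀} => (u : α) ∈ B)).toList with hldef
  have hlmem : ∀ u : {y : α // y ≤ x₀}, u ∈ l ↔ (u : α) ∈ B := by
    intro u; simp [hldef]
  set j := joinList hL ⟨⊥, bot_le⟩ l with hjdef
  set z := (j : α) with hzdef
  set S := {c : α | c ∈ l.map Subtype.val} with hSdef
  have hSB : S ⊆ B := by
    rintro c hc
    simp only [hSdef, Set.mem_setOf_eq, List.mem_map] at hc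
    obtain ⟨b, hb, rfl⟩ := hc
    exact (hlmem b).1 hb
  have hzjoin : z ∈ joinSet S := joinList_mem_joinSet x₀ hL l
  have hzgen : z ∈ genSub B := Set.mem_insert_iff.2 (Or.inr ⟨S, hSB, hzjoin⟩)
  -- a chain of length rk z below z inside genSub B
  obtain ⟨lz, hch, hmem, hlen⟩ :=
    exists_chain_genSub hLG hB (rk z) z S hSB hzjoin rfl
  have hrkz : rk z ≤ rk (⟨z, hzgen⟩ : {y : α // y ∈ genSub B}) := by
    rw [← hlen]
    exact length_le_rk_subtype hzgen lz hch hmem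
  have hlb : rk z ≤ prk {y : α // y ∈ genSub B} :=
    hrkz.trans (Finset.le_sup (Finset.mem_univ _))
  -- key inequality: rk x₀ ≤ rk z + 1
  have hkey : rk x₀ ≤ rk z + 1 := by
    by_cases hax : a ≤ x₀
    · set j2 := join2 hL j ⟨a, hax⟩ with hj2def
      have hstep : rk ((j2 : {y : α // y ≤ x₀}) : α) ≤ rk z + 1 :=
        rk_joinpair_le hLG x₀ ha (join2_mem hL j ⟨a, hax⟩)
      have htop : ((j2 : {y : α // y ≤ x₀}) : α) = x₀ := by
        apply eq_top_of_ub_atoms hLG x₀ j2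
        intro b hb
        by_cases hba : (b : α) = a
        · have : b = (⟨a, hax⟩ : {y : α // y ≤ x₀}) := Subtype.ext hba
          rw [this]
          exact le_join2_right hL _ _
        · have hbB : (b : α) ∈ B := ⟨hb, hba⟩
          have : b ≤ j := le_joinList hL _ l b ((hlmem b).2 hbB)
          exact this.trans (le_join2_left hL _ _)
      rw [← htop]
      exact hstep
    · have htop : z = x₀ := by
        apply eq_top_of_ub_atoms hLG x₀ j
        intro b hb
        have hba : (b : α) ≠ a := by
          intro h
          exact hax (h ▸ b.2)
        exact le_joinList hL _ l b ((hlmem b).2 ⟨hb, hba⟩)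
      rw [← htop]
      omega
  have hprk : prk α = rk x₀ := hx₀
  omega

end PosetArr
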